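/- Let ψ : J → ℝ be C¹ on an interval J containing 0 with ψ'(0) = 2ρ > 0. Then there exist t₀ > 0, a strictly decreasing sequence (y_n) of positive reals with 2y_{n+1} ≤ y_n and y_n → 0, and a sequence (k_n) ⊂ ℤ² ∖ {0}, and a constant C > 0, such that for all large n: y_n ∈ [1/(2^{2n}ρ), 1/(2^{2n-1}ρ)], |k_n|_max ≤ C/y_n, and the angle ψ(y_n) is the angle of the vector k_n with the x-axis (i.e. tan(ψ(y_n)) = k_n,2/k_n,1 when k_n,1 ≠ 0). -/

import Mathlib

open Real Set Filter Topology

private lemma core_tan (g g' : ℝ → ℝ) (ρ a b : ℝ) (q : ℕ) (hρ : 0 < ρ) (hab : a < b) (hq : 0 < q)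
    (hgap : 1 / (q : ℝ) ≤ ρ * (b - a))
    (hg : ∀ x ∈ Set.Icc a b, HasDerivAt g (g' x) x)
    (hg' : ∀ x ∈ Set.Icc a b, ρ ≤ g' x)
    (hcos : ∀ x ∈ Set.Icc a b, Real.cos (g x) ≠ 0) :
    ∃ y ∈ Set.Icc a b, ∃ p : ℤ,
      Real.tan (g y) = (p : ℝ) / (q : ℝ) ∧ |(p : ℝ)| ≤ |Real.tan (g a)| * q + 1 := by
  have hq' : (0 : ℝ) < q := by exact_mod_cast hq
  set T : ℝ → ℝ := fun x => Real.tan (g x) with hT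
  have hTd : ∀ x ∈ Set.Icc a b, HasDerivAt T (1 / Real.cos (g x) ^ 2 * g' x) x := by
    intro x hx
    exact (Real.hasDerivAt_tan (hcos x hx)).comp x (hg x hx)
  have hTc : ContinuousOn T (Set.Icc a b) := fun x hx =>
    (hTd x hx).continuousAt.continuousWithinAt
  have haI : a ∈ Set.Icc a b := ⟨le_rfl, hab.le⟩
  have hbI : b ∈ Set.Icc a b := ⟨hab.le, le_rfl⟩
  have hgap2 : ρ * (b - a) ≤ T b - T a := by
    refine (convex_Icc a b).mul_sub_le_image_sub_of_le_deriv hTc ?_ ?_ a haI b hbI hab.le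
    · intro x hx
      rw [interior_Icc] at hx
      exact ((hTd x (Set.Ioo_subset_Icc_self hx)).differentiableAt).differentiableWithinAt
    · intro x hx
      rw [interior_Icc] at hx
      have hx' := Set.Ioo_subset_Icc_self hx
      rw [(hTd x hx').deriv]
      have hc2 : 0 < Real.cos (g x) ^ 2 := by
        have := hcos x hx'; positivity
      have hc2' : Real.cos (g x) ^ 2 ≤ 1 := by
        nlinarith [Real.neg_one_le_cos (g x), Real.cos_le_one (g x)]
      have h1 : (1 : ℝ) ≤ 1 / Real.cos (g x) ^ 2 := by
        rw [le_div_iff₀ hc2]; linarith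
      have h2 := hg' x hx'
      nlinarith
  set p : ℤ := ⌈T a * q⌉ with hp
  have hp1 : T a * q ≤ (p : ℝ) := Int.le_ceil _
  have hp2 : (p : ℝ) < T a * q + 1 := Int.ceil_lt_add_one _
  have hmem : (p : ℝ) / q ∈ Set.Icc (T a) (T b) := by
    constructor
    · rw [le_div_iff₀ hq']; exact hp1
    · rw [div_le_iff₀ hq']
      have h1q : (1 : ℝ) ≤ (T b - T a) * q := by
        rw [div_le_iff₀ hq'] at hgap
        nlinarith
      nlinarith
  obtain ⟨y, hy, hTy⟩ := intermediate_value_Icc hab.le hTc hmem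
  refine ⟨y, hy, p, hTy, ?_⟩
  rw [abs_le]
  constructor <;> nlinarith [le_abs_self (T a), neg_abs_le (T a), hq'.le, abs_nonneg (T a)]

set_option maxHeartbeats 1000000 in
theorem stmt_8 (J : Set ℝ) (hJ : IsOpen J) (h0J : (0 : ℝ) ∈ J)
    (ψ : ℝ → ℝ) (hψ : ContDiffOn ℝ 1 ψ J)
    (ρ : ℝ) (hρ : 0 < ρ) (hψ' : deriv ψ 0 = 2 * ρ) :
    ∃ t₀ : ℝ, 0 < t₀ ∧
    ∃ y : ℕ → ℝ, ∃ kk : ℕ → ℤ × ℤ, ∃ C : ℝ, 0 < C ∧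
      (∀ n, 0 < y n) ∧ (∀ n, 2 * y (n + 1) ≤ y n) ∧
      Tendsto y atTop (nhds 0) ∧
      ∃ N : ℕ, ∀ n ≥ N,
        y n ∈ Set.Icc (1 / (2 ^ (2 * n) * ρ)) (1 / (2 ^ (2 * n - 1) * ρ)) ∧
        y n ∈ Set.Ioo (-t₀) t₀ ∧
        kk n ≠ 0 ∧
        (max |(kk n).1| |(kk n).2| : ℤ) ≤ C / y n ∧
        Real.tan (ψ (y n)) * ((kk n).1 : ℝ) = ((kk n).2 : ℝ) := by
  classical
  have hψd : ∀ x ∈ J, HasDerivAt ψ (deriv ψ x) x := fun x hx =>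
    ((hψ.differentiableOn one_ne_zero).differentiableAt (hJ.mem_nhds hx)).hasDerivAt
  have hdc : ContinuousOn (deriv ψ) J := hψ.continuousOn_deriv_of_isOpen hJ le_rfl
  -- choose the auxiliary function g (either ψ or ψ - π/2) so that cos (g 0) ≠ 0
  obtain ⟨g, hgd, hg0, hconv⟩ :
      ∃ g : ℝ → ℝ, (∀ x ∈ J, HasDerivAt g (deriv ψ x) x) ∧ Real.cos (g 0) ≠ 0 ∧
        ∀ y' : ℝ, Real.cos (g y') ≠ 0 → ∀ p : ℤ, ∀ q : ℕ, 0 < q →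
          Real.tan (g y') = (p : ℝ) / q →
          ∃ k : ℤ × ℤ, k ≠ 0 ∧ ((max |k.1| |k.2| : ℤ) : ℝ) ≤ |(p : ℝ)| + q ∧
            Real.tan (ψ y') * k.1 = k.2 := by
    by_cases hc : Real.cos (ψ 0) = 0
    · refine ⟨fun y => ψ y - π/2, fun x hx => (hψd x hx).sub_const _, ?_, ?_⟩
      · have h1 : Real.cos (ψ 0 - π/2) = Real.sin (ψ 0) := by
          rw [← Real.cos_neg, neg_sub, Real.cos_pi_div_two_sub]
        simp only [h1]
        intro h
        have h2 := Real.sin_sq_add_cos_sq (ψ 0)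
        rw [h, hc] at h2; norm_num at h2
      · intro y' hcy p q hq htan
        have hq' : (0:ℝ) < q := by exact_mod_cast hq
        simp only at hcy htan
        have hcos_eq : Real.cos (ψ y' - π/2) = Real.sin (ψ y') := by
          rw [← Real.cos_neg, neg_sub, Real.cos_pi_div_two_sub]
        have hsin_eq : Real.sin (ψ y' - π/2) = -Real.cos (ψ y') := by
          rw [← neg_sub, Real.sin_neg, Real.sin_pi_div_two_sub]
        have hsin : Real.sin (ψ y') ≠ 0 := by rwa [hcos_eq] at hcy
        rw [Real.tan_eq_sin_div_cos, hsin_eq, hcos_eq] at htan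
        have hkey : Real.cos (ψ y') * q = -(p * Real.sin (ψ y')) := by
          field_simp at htan
          linarith
        by_cases hp : p = 0
        · refine ⟨(1, 0), by simp, ?_, ?_⟩
          · have h1q : (1:ℝ) ≤ q := by exact_mod_cast hq
            simp
            nlinarith [abs_nonneg (p:ℝ)]
          · have hc0 : Real.cos (ψ y') = 0 := by
              rw [hp] at hkey; push_cast at hkey; nlinarith
            simp [Real.tan_eq_sin_div_cos, hc0]
        · have hcne : Real.cos (ψ y') ≠ 0 := by
            intro h
            rw [h] at hkey
            rcases mul_eq_zero.1 (by linarith : (p:ℝ) * Real.sin (ψ y') = 0) with h1 | h2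
            · exact hp (by exact_mod_cast h1)
            · exact hsin h2
          refine ⟨(p, -q), ?_, ?_, ?_⟩
          · simp [Prod.ext_iff, hp]
          · push_cast
            rw [abs_neg, abs_of_nonneg (by positivity : (0:ℝ) ≤ (q:ℝ))]
            rcases max_cases |(p:ℝ)| (q:ℝ) with ⟨h1, _⟩ | ⟨h1, _⟩ <;> rw [h1] <;>
              nlinarith [abs_nonneg (p:ℝ)]
          · push_cast
            rw [Real.tan_eq_sin_div_cos]
            field_simp
            nlinarith [hkey]
    · refine ⟨ψ, hψd, hc, ?_⟩
      intro y' hcy p q hq htan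
      have hq' : (0:ℝ) < q := by exact_mod_cast hq
      refine ⟨((q : ℤ), p), ?_, ?_, ?_⟩
      · simp [Prod.ext_iff]; omega
      · push_cast
        rw [abs_of_nonneg (by positivity : (0:ℝ) ≤ (q:ℝ))]
        rcases max_cases (q:ℝ) |(p:ℝ)| with ⟨h1, _⟩ | ⟨h1, _⟩ <;> rw [h1] <;>
          nlinarith [abs_nonneg (p:ℝ)]
      · push_cast
        rw [htan, div_mul_cancel₀]
        exact ne_of_gt hq'
  set M : ℝ := |Real.tan (g 0)| + 1 with hM
  have hM1 : 1 ≤ M := le_add_of_nonneg_left (abs_nonneg _)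
  -- a good neighborhood of 0
  have hU : {x | ρ < deriv ψ x ∧ Real.cos (g x) ≠ 0 ∧ |Real.tan (g x)| < M} ∩ J ∈ 𝓝 (0:ℝ) := by
    refine Filter.inter_mem ?_ (hJ.mem_nhds h0J)
    have hcd : ContinuousAt (deriv ψ) 0 := hdc.continuousAt (hJ.mem_nhds h0J)
    have h1 : ∀ᶠ x in 𝓝 (0:ℝ), ρ < deriv ψ x :=
      hcd (Ioi_mem_nhds (by rw [hψ']; linarith))
    have hgc : ContinuousAt g 0 := (hgd 0 h0J).continuousAt
    have h2 : ∀ᶠ x in 𝓝 (0:ℝ), Real.cos (g x) ≠ 0 :=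
      (Real.continuous_cos.continuousAt.comp hgc) (compl_singleton_mem_nhds hg0)
    have htc : ContinuousAt (fun x => Real.tan (g x)) 0 :=
      (Real.continuousAt_tan.2 hg0).comp hgc
    have h3 : ∀ᶠ x in 𝓝 (0:ℝ), |Real.tan (g x)| < M :=
      htc.abs (Iio_mem_nhds (by rw [hM]; linarith))
    filter_upwards [h1, h2, h3] with x hx1 hx2 hx3
    exact ⟨hx1, hx2, hx3⟩
  obtain ⟨ε, hε, hball⟩ := Metric.mem_nhds_iff.1 hU
  -- every x ∈ (0, ε/2] is "good"
  have hgood : ∀ x : ℝ, 0 < x → x ≤ ε/2 →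
      (ρ < deriv ψ x ∧ Real.cos (g x) ≠ 0 ∧ |Real.tan (g x)| < M) ∧ x ∈ J := by
    intro x hx1 hx2
    apply hball
    rw [Metric.mem_ball, Real.dist_eq, sub_zero, abs_of_pos hx1]
    linarith
  -- choose N
  obtain ⟨N₀, hN₀⟩ := pow_unbounded_of_one_lt (2/(ρ*ε)) (one_lt_two (α := ℝ))
  set N : ℕ := N₀ + 1 with hN
  have hBt : ∀ n, N ≤ n → 1/((2:ℝ)^(2*n-1)*ρ) ≤ ε/2 := by
    intro n hn
    have hpow : 2/(ρ*ε) < (2:ℝ)^(2*n-1) :=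
      lt_of_lt_of_le hN₀ (pow_le_pow_right₀ one_le_two (by omega))
    rw [div_lt_iff₀ (by positivity)] at hpow
    rw [div_le_div_iff₀ (by positivity) (by norm_num)]
    nlinarith [pow_pos (by norm_num : (0:ℝ) < 2) (2*n-1)]
  -- abbreviations for the interval endpoints
  set A : ℕ → ℝ := fun n => 1/(2^(2*n)*ρ) with hA
  set B : ℕ → ℝ := fun n => 1/(2^(2*n-1)*ρ) with hB
  have hApos : ∀ n, 0 < A n := fun n => by rw [hA]; positivity
  have hBpos : ∀ n, 0 < B n := fun n => by rw [hB]; positivity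
  have hABle : ∀ n, A n ≤ B n := by
    intro n
    rw [hA, hB]
    simp only
    rw [div_le_div_iff₀ (by positivity) (by positivity)]
    have : (2:ℝ)^(2*n-1) ≤ 2^(2*n) := pow_le_pow_right₀ one_le_two (by omega)
    nlinarith
  -- the main per-n existence
  have Hex : ∀ n, N ≤ n → ∃ y', y' ∈ Set.Icc (A n) (B n) ∧ ∃ k : ℤ × ℤ, k ≠ 0 ∧
      ((max |k.1| |k.2| : ℤ) : ℝ) ≤ (M+2) * 2^(2*n) ∧ Real.tan (ψ y') * k.1 = k.2 := by
    intro n hn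
    have hpow2 : (2:ℝ)^(2*n) = 2^(2*n-1) * 2 := by
      rw [← pow_succ]
      congr 1
      omega
    have hab : A n < B n := by
      rw [hA, hB]
      simp only
      rw [div_lt_div_iff₀ (by positivity) (by positivity)]
      nlinarith [pow_pos (by norm_num : (0:ℝ) < 2) (2*n-1)]
    have hsub : ∀ x ∈ Set.Icc (A n) (B n),
        (ρ < deriv ψ x ∧ Real.cos (g x) ≠ 0 ∧ |Real.tan (g x)| < M) ∧ x ∈ J := by
      intro x hx
      exact hgood x (lt_of_lt_of_le (hApos n) hx.1) (le_trans hx.2 (hBt n hn))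
    have hq : 0 < 2^(2*n) := Nat.pow_pos (by norm_num)
    have hqcast : ((2^(2*n) : ℕ) : ℝ) = 2^(2*n) := by push_cast; ring
    have hgap : 1 / (((2^(2*n) : ℕ)) : ℝ) ≤ ρ * (B n - A n) := by
      rw [hqcast]
      have heq : ρ * (B n - A n) = 1/(2^(2*n)) := by
        rw [hA, hB]
        simp only
        rw [hpow2]
        have h1 : (2:ℝ)^(2*n-1) ≠ 0 := by positivity
        field_simp
        ring
      rw [heq]
    obtain ⟨y', hy', p, htan, hpb⟩ := core_tan g (deriv ψ) ρ (A n) (B n) (2^(2*n)) hρ hab hq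
      hgap (fun x hx => hgd x (hsub x hx).2) (fun x hx => (hsub x hx).1.1.le)
      (fun x hx => (hsub x hx).1.2.1)
    obtain ⟨k, hk0, hkb, hkt⟩ := hconv y' ((hsub y' hy').1.2.1) p (2^(2*n)) hq htan
    refine ⟨y', hy', k, hk0, ?_, hkt⟩
    have hMa : |Real.tan (g (A n))| < M := (hsub (A n) ⟨le_rfl, hab.le⟩).1.2.2
    have h2n1 : (1:ℝ) ≤ 2^(2*n) := one_le_pow₀ (by norm_num)
    rw [hqcast] at hpb hkb
    nlinarith [abs_nonneg (Real.tan (g (A n)))]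
  -- define the sequences by choice
  set y : ℕ → ℝ := fun n => if h : N ≤ n then (Hex n h).choose else A n with hy
  set kk : ℕ → ℤ × ℤ := fun n => if h : N ≤ n then (Hex n h).choose_spec.2.choose else (1,0)
    with hkk
  have hyeq : ∀ n (h : N ≤ n), y n = (Hex n h).choose := fun n h => by
    rw [hy]; simp only [dif_pos h]
  have hkkeq : ∀ n (h : N ≤ n), kk n = (Hex n h).choose_spec.2.choose := fun n h => by
    rw [hkk]; simp only [dif_pos h]
  have hyAB : ∀ n, A n ≤ y n ∧ y n ≤ B n := by
    intro n
    by_cases h : N ≤ n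
    · rw [hyeq n h]
      exact ⟨(Hex n h).choose_spec.1.1, (Hex n h).choose_spec.1.2⟩
    · rw [hy]; simp only [dif_neg h]
      exact ⟨le_rfl, hABle n⟩
  have hypos : ∀ n, 0 < y n := fun n => lt_of_lt_of_le (hApos n) (hyAB n).1
  refine ⟨ε, hε, y, kk, (M+2)*2/ρ, div_pos (by nlinarith) hρ, hypos, ?_, ?_, N, ?_⟩
  · -- 2 y (n+1) ≤ y n
    intro n
    have h1 : 2 * B (n+1) = A n := by
      rw [hA, hB]
      simp only
      rw [show 2*(n+1)-1 = 2*n+1 from by omega, pow_succ]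
      have h2 : (2:ℝ)^(2*n) ≠ 0 := by positivity
      field_simp
    linarith [(hyAB (n+1)).2, (hyAB n).1]
  · -- tendsto 0
    have hup : ∀ᶠ n in atTop, y n ≤ (1/ρ)*(1/2:ℝ)^n := by
      filter_upwards [eventually_ge_atTop 1] with n hn
      have hple : (2:ℝ)^n ≤ 2^(2*n-1) := pow_le_pow_right₀ one_le_two (by omega)
      have heq : (1/ρ)*(1/2:ℝ)^n = 1/(2^n*ρ) := by
        rw [one_div_pow]
        field_simp
      have h2 : B n ≤ (1/ρ)*(1/2:ℝ)^n := by
        rw [heq, hB]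
        simp only
        exact one_div_le_one_div_of_le (by positivity) (by nlinarith)
      exact le_trans (hyAB n).2 h2
    have hlow : ∀ᶠ n in atTop, (0:ℝ) ≤ y n := Filter.Eventually.of_forall fun n => (hypos n).le
    have hlim : Tendsto (fun n => (1/ρ)*(1/2:ℝ)^n) atTop (𝓝 0) := by
      have := (tendsto_pow_atTop_nhds_zero_of_lt_one (by norm_num : (0:ℝ) ≤ 1/2)
        (by norm_num)).const_mul (1/ρ)
      simpa using this
    exact tendsto_of_tendsto_of_tendsto_of_le_of_le' tendsto_const_nhds hlim hlow hup
  · -- main estimates for n ≥ N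
    intro n hn
    have hkspec := (Hex n hn).choose_spec.2.choose_spec
    have hyB := (hyAB n).2
    have hyA := (hyAB n).1
    have hkb : ((max |(kk n).1| |(kk n).2| : ℤ) : ℝ) ≤ (M+2) * 2^(2*n) := by
      rw [hkkeq n hn]; exact hkspec.2.1
    have hmaxpos : (0:ℝ) ≤ ((max |(kk n).1| |(kk n).2| : ℤ) : ℝ) := by
      have : (0:ℤ) ≤ max |(kk n).1| |(kk n).2| := le_max_of_le_left (abs_nonneg _)
      exact_mod_cast this
    refine ⟨⟨hyA, hyB⟩, ⟨by linarith [hypos n], ?_⟩, ?_, ?_, ?_⟩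
    · -- y n < ε
      have hBn : B n ≤ ε/2 := hBt n hn
      linarith
    · rw [hkkeq n hn]; exact hkspec.1
    · -- max bound
      rw [le_div_iff₀ (hypos n)]
      have hpow2 : (2:ℝ)^(2*n) = 2^(2*n-1) * 2 := by
        rw [← pow_succ]
        congr 1
        omega
      have hCeq : ((M+2) * 2^(2*n)) * B n = (M+2)*2/ρ := by
        rw [hB]
        simp only
        rw [hpow2]
        have h1 : (2:ℝ)^(2*n-1) ≠ 0 := by positivity
        field_simp
      calc ((max |(kk n).1| |(kk n).2| : ℤ) : ℝ) * y n
          ≤ ((M+2) * 2^(2*n)) * B n := by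
            apply mul_le_mul hkb hyB (hypos n).le
            nlinarith [pow_pos (by norm_num : (0:ℝ) < 2) (2*n)]
        _ = (M+2)*2/ρ := hCeq
    · rw [hyeq n hn, hkkeq n hn]
      exact hkspec.2.2
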